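/- A finite nonempty set S of positive integers with maximum element m is an admissible pinnacle set if and only if S \ {m} is an admissible pinnacle set and m > 2|S|. -/

import Mathlib

open Finset

/-- `i` is a peak of the permutation `w` of `{1,…,n}` (represented on `Fin n`):
`0 < i < n-1` (0-indexed) and `w(i-1) < w(i) > w(i+1)`. -/
def IsPeak {n : ℕ} (w : Equiv.Perm (Fin n)) (i : Fin n) : Prop :=
  0 < i.val ∧ ∃ h : i.val + 1 < n,
    w ⟨i.val - 1, Nat.lt_of_le_of_lt (Nat.sub_le _ _) i.isLt⟩ < w i ∧
    w ⟨i.val + 1, h⟩ < w i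

/-- The pinnacle set of `w`, as a set of values in `{1,…,n}`. -/
def Pin {n : ℕ} (w : Equiv.Perm (Fin n)) : Set ℕ :=
  {v | ∃ i : Fin n, IsPeak w i ∧ v = (w i).val + 1}

/-- `p_S(n)`: the number of permutations in `S_n` with pinnacle set `S`. -/
noncomputable def pcount (n : ℕ) (S : Set ℕ) : ℕ :=
  Nat.card {w : Equiv.Perm (Fin n) // Pin w = S}

/-- `S` is an admissible pinnacle set. -/
def Admissible (S : Finset ℕ) : Prop :=
  ∃ (n : ℕ) (w : Equiv.Perm (Fin n)), Pin w = ↑S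

lemma card_filter_lt_orderEmbOfFin (A : Finset ℕ) {k : ℕ} (h : A.card = k) (i : Fin k) :
    (A.filter (· < A.orderEmbOfFin h i)).card = i.val := by
  classical
  have key : A.filter (· < A.orderEmbOfFin h i)
      = (Finset.Iio i).image (fun j => A.orderEmbOfFin h j) := by
    ext x
    simp only [mem_filter, mem_image, mem_Iio]
    constructor
    · rintro ⟨hxA, hxlt⟩
      have hx : x ∈ Set.range (A.orderEmbOfFin h) := by
        rw [A.range_orderEmbOfFin h]; exact hxA
      obtain ⟨j, rfl⟩ := hx
      exact ⟨j, (A.orderEmbOfFin h).lt_iff_lt.1 hxlt, rfl⟩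
    · rintro ⟨j, hj, rfl⟩
      exact ⟨A.orderEmbOfFin_mem h j, (A.orderEmbOfFin h).lt_iff_lt.2 hj⟩
  rw [key, card_image_of_injective _ (A.orderEmbOfFin h).injective]
  simp

lemma orderEmbOfFin_lt_of_card_filter {A : Finset ℕ} {k : ℕ} (h : A.card = k) (i : Fin k)
    {b : ℕ} (hb : i.val < (A.filter (· < b)).card) : A.orderEmbOfFin h i < b := by
  classical
  by_contra hle
  push_neg at hle
  have hsub : A.filter (· < b) ⊆ A.filter (· < A.orderEmbOfFin h i) := by
    intro x hx
    rw [mem_filter] at hx ⊢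
    exact ⟨hx.1, lt_of_lt_of_le hx.2 hle⟩
  have := card_le_card hsub
  rw [card_filter_lt_orderEmbOfFin] at this
  omega

lemma good_admissible {S : Finset ℕ} (hgood : ∀ s ∈ S, 2 * (S.filter (· ≤ s)).card < s) :
    Admissible S := by
  classical
  rcases S.eq_empty_or_nonempty with rfl | hS
  · exact ⟨0, 1, by ext v; simp [Pin]⟩
  -- basic data
  set k := S.card with hk
  have hk0 : 0 < k := card_pos.2 hS
  set n := S.max' hS with hn
  have hcardS : S.card = k := rfl
  have hS3 : ∀ y ∈ S, 3 ≤ y := by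
    intro y hy
    have h1 := hgood y hy
    have h2 : y ∈ S.filter (· ≤ y) := mem_filter.2 ⟨hy, le_refl y⟩
    have h3 : 1 ≤ (S.filter (· ≤ y)).card := card_pos.2 ⟨y, h2⟩
    omega
  -- the sorted enumeration of S
  set sv : ℕ → ℕ := fun i => if h : i < k then S.orderEmbOfFin hcardS ⟨i, h⟩ else 0 with hsvdef
  have svapp : ∀ i (h : i < k), sv i = S.orderEmbOfFin hcardS ⟨i, h⟩ := by
    intro i h; simp [hsvdef, h]
  have svmem : ∀ i, i < k → sv i ∈ S := by
    intro i h; rw [svapp i h]; exact S.orderEmbOfFin_mem _ _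
  have svmono : ∀ a b, a < b → b < k → sv a < sv b := by
    intro a b hab hb
    rw [svapp a (lt_trans hab hb), svapp b hb]
    exact (S.orderEmbOfFin hcardS).strictMono (by simpa using hab)
  have svge : ∀ i, i < k → 2 * i + 3 ≤ sv i := by
    intro i h
    have hmem := svmem i h
    have h1 := hgood _ hmem
    have h2 : S.filter (· ≤ sv i) = insert (sv i) (S.filter (· < sv i)) := by
      ext x
      simp only [mem_filter, mem_insert]
      constructor
      · rintro ⟨hxS, hxle⟩
        rcases lt_or_eq_of_le hxle with hlt | heq
        · exact Or.inr ⟨hxS, hlt⟩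
        · exact Or.inl heq
      · rintro (rfl | ⟨hxS, hxlt⟩)
        · exact ⟨hmem, le_refl _⟩
        · exact ⟨hxS, le_of_lt hxlt⟩
    have h3 : sv i ∉ S.filter (· < sv i) := by simp
    have h4 : (S.filter (· < sv i)).card = i := by
      rw [svapp i h] at *
      exact card_filter_lt_orderEmbOfFin S hcardS ⟨i, h⟩
    rw [h2, card_insert_of_notMem h3, h4] at h1
    omega
  have svmax : ∀ i, i < k → sv i ≤ n := by
    intro i h; exact S.le_max' _ (svmem i h)
  have hsvinj : ∀ a b, a < k → b < k → sv a = sv b → a = b := by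
    intro a b ha hb he
    rcases Nat.lt_trichotomy a b with h | h | h
    · exact absurd he (ne_of_lt (svmono a b h hb))
    · exact h
    · exact absurd he.symm (ne_of_lt (svmono b a h ha))
  -- n ≥ 2k+1
  have hn2k : 2 * k + 1 ≤ n := by
    have h1 : sv (k - 1) = n := by
      rw [svapp (k - 1) (by omega)]
      rw [hn]
      exact S.orderEmbOfFin_last hcardS hk0
    have := svge (k - 1) (by omega)
    omega
  -- pinnacle values (minus one) and the complement
  set P : Finset ℕ := S.image (· - 1) with hPdef
  have hPsub : P ⊆ range n := by
    intro x hx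
    obtain ⟨y, hy, rfl⟩ := mem_image.1 hx
    have := hS3 y hy
    have := S.le_max' y hy
    rw [mem_range]
    omega
  have hPcard : P.card = k := by
    rw [hPdef, card_image_of_injOn]
    intro a ha b hb he
    have := hS3 a ha
    have := hS3 b hb
    simp only at he
    omega
  set C : Finset ℕ := range n \ P with hCdef
  have hCcard : C.card = n - k := by
    rw [hCdef, card_sdiff_of_subset hPsub, card_range, hPcard]
  set cv : ℕ → ℕ := fun j => if h : j < n - k then C.orderEmbOfFin hCcard ⟨j, h⟩ else 0
    with hcvdef
  have cvapp : ∀ j (h : j < n - k), cv j = C.orderEmbOfFin hCcard ⟨j, h⟩ := by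
    intro j h; simp [hcvdef, h]
  have cvmem : ∀ j, j < n - k → cv j ∈ C := by
    intro j h; rw [cvapp j h]; exact C.orderEmbOfFin_mem _ _
  have cvlt : ∀ j, j < n - k → cv j < n := by
    intro j h
    have := cvmem j h
    rw [hCdef, mem_sdiff, mem_range] at this
    exact this.1
  have cvnotP : ∀ j, j < n - k → cv j ∉ P := by
    intro j h
    have := cvmem j h
    rw [hCdef, mem_sdiff] at this
    exact this.2
  have cvmono : ∀ a b, a < b → b < n - k → cv a < cv b := by
    intro a b hab hb
    rw [cvapp a (lt_trans hab hb), cvapp b hb]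
    exact (C.orderEmbOfFin hCcard).strictMono (by simpa using hab)
  have hcvinj : ∀ a b, a < n - k → b < n - k → cv a = cv b → a = b := by
    intro a b ha hb he
    rcases Nat.lt_trichotomy a b with h | h | h
    · exact absurd he (ne_of_lt (cvmono a b h hb))
    · exact h
    · exact absurd he.symm (ne_of_lt (cvmono b a h ha))
  have svP : ∀ i, i < k → sv i - 1 ∈ P := by
    intro i h
    exact mem_image.2 ⟨sv i, svmem i h, rfl⟩
  have hnk : k + 1 ≤ n - k := by omega
  -- counting in P below a pinnacle value
  have hPfilter : ∀ t, (ht : t < k) → (P.filter (· < sv t - 1)).card = t := by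
    intro t ht
    have key : P.filter (· < sv t - 1) = (S.filter (· < sv t)).image (· - 1) := by
      ext x
      simp only [mem_filter, mem_image, hPdef]
      constructor
      · rintro ⟨⟨y, hy, rfl⟩, hlt⟩
        have h3 := hS3 y hy
        have h3' := hS3 _ (svmem t ht)
        exact ⟨y, ⟨hy, by omega⟩, rfl⟩
      · rintro ⟨y, ⟨hy, hlt⟩, rfl⟩
        have h3 := hS3 y hy
        have h3' := hS3 _ (svmem t ht)
        exact ⟨⟨y, hy, rfl⟩, by omega⟩
    rw [key, card_image_of_injOn]
    · rw [svapp t ht]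
      exact card_filter_lt_orderEmbOfFin S hcardS ⟨t, ht⟩
    · intro a ha b hb he
      rw [mem_coe, mem_filter] at ha hb
      have := hS3 a ha.1
      have := hS3 b hb.1
      simp only at he
      omega
  -- counting in C below a pinnacle value
  have hCfilter : ∀ t, (ht : t < k) → (C.filter (· < sv t - 1)).card = sv t - 1 - t := by
    intro t ht
    have hb : sv t - 1 ≤ n := by have := svmax t ht; omega
    have key : C.filter (· < sv t - 1) = range (sv t - 1) \ P := by
      ext x
      simp only [hCdef, mem_filter, mem_sdiff, mem_range]
      constructor
      · rintro ⟨⟨h1, h2⟩, h3⟩; exact ⟨h3, h2⟩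
      · rintro ⟨h1, h2⟩; exact ⟨⟨by omega, h2⟩, h1⟩
    have key2 : range (sv t - 1) ∩ P = P.filter (· < sv t - 1) := by
      ext x
      simp only [mem_inter, mem_range, mem_filter]
      tauto
    have h5 := Finset.card_sdiff_add_card_inter (range (sv t - 1)) P
    rw [key2, hPfilter t ht, card_range] at h5
    rw [key]
    omega
  -- the key inequality: fillers are below the corresponding pinnacle values
  have F2 : ∀ t j, t < k → j ≤ t + 1 → j < n - k → cv j < sv t - 1 := by
    intro t j ht hj hjn
    rw [cvapp j hjn]
    apply orderEmbOfFin_lt_of_card_filter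
    rw [hCfilter t ht]
    have := svge t ht
    simp only
    omega
  -- the value function
  set v : ℕ → ℕ := fun j =>
    if j < 2 * k ∧ j % 2 = 1 then sv (j / 2) - 1
    else if j < 2 * k then cv (j / 2)
    else cv (j - k) with hvdef
  have hv1 : ∀ j, j < 2 * k → j % 2 = 1 → v j = sv (j / 2) - 1 := by
    intro j h1 h2; simp [hvdef, h1, h2]
  have hv2 : ∀ j, j < 2 * k → j % 2 = 0 → v j = cv (j / 2) := by
    intro j h1 h2; simp [hvdef, h1]; omega
  have hv3 : ∀ j, 2 * k ≤ j → v j = cv (j - k) := by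
    intro j h1
    have : ¬ (j < 2 * k) := by omega
    simp [hvdef, this]
  have hvlt : ∀ j, j < n → v j < n := by
    intro j hj
    rcases Nat.lt_or_ge j (2 * k) with h | h
    · rcases Nat.even_or_odd j with he | he
      · rw [hv2 j h (Nat.even_iff.1 he)]
        exact cvlt _ (by omega)
      · rw [hv1 j h (Nat.odd_iff.1 he)]
        have h1 := svmax (j / 2) (by omega)
        have h2 := svge (j / 2) (by omega)
        omega
    · rw [hv3 j h]
      exact cvlt _ (by omega)
  have hvinj : ∀ a b, a < n → b < n → v a = v b → a = b := by
    intro a b ha hb he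
    have hdisj : ∀ x y, x < k → y < n - k → sv x - 1 ≠ cv y := by
      intro x y hx hy hcon
      exact cvnotP y hy (hcon ▸ svP x hx)
    rcases Nat.lt_or_ge a (2 * k) with h1 | h1 <;> rcases Nat.lt_or_ge b (2 * k) with h2 | h2
    · rcases Nat.even_or_odd a with hea | hea <;> rcases Nat.even_or_odd b with heb | heb
      · rw [hv2 a h1 (Nat.even_iff.1 hea), hv2 b h2 (Nat.even_iff.1 heb)] at he
        have := hcvinj _ _ (by omega) (by omega) he
        have ha2 := Nat.even_iff.1 hea
        have hb2 := Nat.even_iff.1 heb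
        omega
      · rw [hv2 a h1 (Nat.even_iff.1 hea), hv1 b h2 (Nat.odd_iff.1 heb)] at he
        exact absurd he.symm (hdisj _ _ (by omega) (by omega))
      · rw [hv1 a h1 (Nat.odd_iff.1 hea), hv2 b h2 (Nat.even_iff.1 heb)] at he
        exact absurd he (hdisj _ _ (by omega) (by omega))
      · rw [hv1 a h1 (Nat.odd_iff.1 hea), hv1 b h2 (Nat.odd_iff.1 heb)] at he
        have h3 := hS3 _ (svmem (a / 2) (by omega))
        have h4 := hS3 _ (svmem (b / 2) (by omega))
        have : sv (a / 2) = sv (b / 2) := by omega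
        have := hsvinj _ _ (by omega) (by omega) this
        have ha2 := Nat.odd_iff.1 hea
        have hb2 := Nat.odd_iff.1 heb
        omega
    · rw [hv3 b h2] at he
      rcases Nat.even_or_odd a with hea | hea
      · rw [hv2 a h1 (Nat.even_iff.1 hea)] at he
        have := hcvinj _ _ (by omega) (by omega) he
        omega
      · rw [hv1 a h1 (Nat.odd_iff.1 hea)] at he
        exact absurd he (hdisj _ _ (by omega) (by omega))
    · rw [hv3 a h1] at he
      rcases Nat.even_or_odd b with heb | heb
      · rw [hv2 b h2 (Nat.even_iff.1 heb)] at he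
        have := hcvinj _ _ (by omega) (by omega) he
        omega
      · rw [hv1 b h2 (Nat.odd_iff.1 heb)] at he
        exact absurd he.symm (hdisj _ _ (by omega) (by omega))
    · rw [hv3 a h1, hv3 b h2] at he
      have := hcvinj _ _ (by omega) (by omega) he
      omega
  -- build the permutation
  set vf : Fin n → Fin n := fun j => ⟨v j.val, hvlt j.val j.isLt⟩ with hvfdef
  have hvfinj : Function.Injective vf := by
    intro a b he
    have : v a.val = v b.val := congrArg Fin.val he
    exact Fin.ext (hvinj _ _ a.isLt b.isLt this)
  have hvfbij : Function.Bijective vf :=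
    (Fintype.bijective_iff_injective_and_card vf).2 ⟨hvfinj, rfl⟩
  refine ⟨n, Equiv.ofBijective vf hvfbij, ?_⟩
  have hwapp : ∀ j : Fin n, (Equiv.ofBijective vf hvfbij) j = vf j := fun j => rfl
  ext x
  simp only [Set.mem_setOf_eq, Pin, mem_coe]
  constructor
  · rintro ⟨i, ⟨hi0, hin, hl, hr⟩, rfl⟩
    simp only [hwapp, Equiv.ofBijective_apply, hvfdef, Fin.lt_def, Fin.mk_lt_mk] at hl hr ⊢
    -- hl : v (i.val - 1) < v i.val, hr : v (i.val + 1) < v i.val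
    rcases Nat.lt_or_ge i.val (2 * k) with h1 | h1
    · rcases Nat.even_or_odd i.val with he | he
      · -- even position: left neighbor is a bigger pinnacle value, contradiction
        exfalso
        have he2 := Nat.even_iff.1 he
        have him1 : i.val - 1 < 2 * k := by omega
        have him1o : (i.val - 1) % 2 = 1 := by omega
        rw [hv2 _ h1 he2, hv1 _ him1 him1o] at hl
        have hidx : (i.val - 1) / 2 = i.val / 2 - 1 := by omega
        rw [hidx] at hl
        have := F2 (i.val / 2 - 1) (i.val / 2) (by omega) (by omega) (by omega)
        omega
      · -- odd position: a pinnacle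
        have he2 := Nat.odd_iff.1 he
        rw [hv1 _ h1 he2]
        have h3 := hS3 _ (svmem (i.val / 2) (by omega))
        have : sv (i.val / 2) - 1 + 1 = sv (i.val / 2) := by omega
        rw [this]
        exact svmem _ (by omega)
    · -- tail position: increasing run, contradiction
      exfalso
      rw [hv3 _ h1, hv3 _ (by omega)] at hr
      have : i.val + 1 - k > i.val - k := by omega
      have := cvmono (i.val - k) (i.val + 1 - k) (by omega) (by omega)
      omega
  · intro hx
    have hxr : x ∈ Set.range (S.orderEmbOfFin hcardS) := by
      rw [S.range_orderEmbOfFin hcardS]; exact hx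
    obtain ⟨⟨t, ht⟩, hteq⟩ := hxr
    have hxv : sv t = x := by rw [svapp t ht]; exact hteq
    have hi : 2 * t + 1 < n := by omega
    refine ⟨⟨2 * t + 1, hi⟩, ⟨by simp, ⟨by simp; omega, ?_, ?_⟩⟩, ?_⟩
    · -- left neighbor
      simp only [hwapp, Equiv.ofBijective_apply, hvfdef, Fin.lt_def, Fin.mk_lt_mk]
      have e1 : (2 * t + 1) - 1 = 2 * t := by omega
      rw [e1, hv2 (2 * t) (by omega) (by omega), hv1 (2 * t + 1) (by omega) (by omega)]
      have e2 : (2 * t) / 2 = t := by omega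
      have e3 : (2 * t + 1) / 2 = t := by omega
      rw [e2, e3]
      exact F2 t t ht (by omega) (by omega)
    · -- right neighbor
      simp only [hwapp, Equiv.ofBijective_apply, hvfdef, Fin.lt_def, Fin.mk_lt_mk]
      rw [hv1 (2 * t + 1) (by omega) (by omega)]
      have e3 : (2 * t + 1) / 2 = t := by omega
      rw [e3]
      have key : v (2 * t + 2) = cv (t + 1) := by
        rcases Nat.lt_or_ge (2 * t + 2) (2 * k) with h | h
        · rw [hv2 _ h (by omega)]
          congr 1
          omega
        · rw [hv3 _ (by omega)]
          congr 1
          omega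
      rw [key]
      exact F2 t (t + 1) ht (by omega) (by omega)
    · simp only [hwapp, Equiv.ofBijective_apply, hvfdef]
      rw [hv1 (2 * t + 1) (by omega) (by omega)]
      have e3 : (2 * t + 1) / 2 = t := by omega
      rw [e3]
      have h3 := hS3 _ (svmem t ht)
      omega

lemma peaks_not_adjacent {n : ℕ} (w : Equiv.Perm (Fin n)) {i j : Fin n}
    (hi : IsPeak w i) (hj : IsPeak w j) (hij : j.val + 1 = i.val) : False := by
  obtain ⟨hi0, hin, hil, hir⟩ := hi
  obtain ⟨hj0, hjn, hjl, hjr⟩ := hj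
  have e1 : (⟨i.val - 1, Nat.lt_of_le_of_lt (Nat.sub_le _ _) i.isLt⟩ : Fin n) = j := by
    apply Fin.ext; simp; omega
  have e2 : (⟨j.val + 1, hjn⟩ : Fin n) = i := by apply Fin.ext; simpa
  rw [e1] at hil
  rw [e2] at hjr
  exact absurd hil (not_lt.2 (le_of_lt hjr))

lemma admissible_good {S : Finset ℕ} (h : Admissible S) :
    ∀ s ∈ S, 2 * (S.filter (· ≤ s)).card < s := by
  classical
  obtain ⟨n, w, hw⟩ := h
  intro s hs
  have hsPin : s ∈ Pin w := by rw [hw]; exact_mod_cast hs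
  obtain ⟨i₀, hi₀, rfl⟩ := hsPin
  set P : Finset (Fin n) := univ.filter (fun p => IsPeak w p ∧ w p ≤ w i₀) with hPdef
  have hmemP : ∀ p, p ∈ P ↔ IsPeak w p ∧ w p ≤ w i₀ := by
    intro p; simp [hPdef]
  -- card equality
  have hcard : (S.filter (· ≤ (w i₀).val + 1)).card = P.card := by
    refine (Finset.card_bij (fun p _ => (w p).val + 1) ?_ ?_ ?_).symm
    · intro p hp
      rw [hmemP] at hp
      rw [mem_filter]
      constructor
      · have : ((w p).val + 1) ∈ Pin w := ⟨p, hp.1, rfl⟩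
        rw [hw] at this; exact_mod_cast this
      · have := hp.2
        rw [Fin.le_def] at this
        omega
    · intro p hp p' hp' he
      have : w p = w p' := by apply Fin.ext; omega
      exact w.injective this
    · intro v hv
      rw [mem_filter] at hv
      have : v ∈ Pin w := by rw [hw]; exact_mod_cast hv.1
      obtain ⟨p, hp, rfl⟩ := this
      refine ⟨p, ?_, by dsimp only⟩
      rw [hmemP]
      refine ⟨hp, ?_⟩
      rw [Fin.le_def]
      omega
  have hi₀P : i₀ ∈ P := (hmemP i₀).2 ⟨hi₀, le_refl _⟩
  have hPne : P.Nonempty := ⟨i₀, hi₀P⟩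
  set p₀ : Fin n := P.max' hPne with hp₀def
  have hp₀P : p₀ ∈ P := P.max'_mem hPne
  have hp₀peak : IsPeak w p₀ := ((hmemP p₀).1 hp₀P).1
  obtain ⟨hp₀0, hp₀n, hp₀l, hp₀r⟩ := hp₀peak
  set pm : Fin n → Fin n := fun p => ⟨p.val - 1, Nat.lt_of_le_of_lt (Nat.sub_le _ _) p.isLt⟩
    with hpmdef
  set q : Fin n := ⟨p₀.val + 1, hp₀n⟩ with hqdef
  have hvalP : ∀ p ∈ P, p.val ≥ 1 ∧ p.val + 1 < n := by
    intro p hp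
    obtain ⟨⟨h1, h2, _⟩, _⟩ := (hmemP p).1 hp
    exact ⟨h1, h2⟩
  set A : Finset (Fin n) := (P ∪ P.image pm) ∪ {q} with hAdef
  have hdisj1 : Disjoint P (P.image pm) := by
    rw [disjoint_left]
    intro x hxP hxI
    obtain ⟨p, hp, he⟩ := mem_image.1 hxI
    have hx : x.val = p.val - 1 := by rw [← he]
    have hp1 := (hvalP p hp).1
    have hx1 := (hvalP x hxP).1
    exact peaks_not_adjacent w ((hmemP p).1 hp).1 ((hmemP x).1 hxP).1 (by omega)
  have hinjpm : Set.InjOn pm P := by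
    intro a ha b hb he
    have h1 := (hvalP a ha).1
    have h2 := (hvalP b hb).1
    have : a.val - 1 = b.val - 1 := congrArg Fin.val he
    apply Fin.ext; omega
  have hqnot : q ∉ P ∪ P.image pm := by
    intro hq
    rcases mem_union.1 hq with hq | hq
    · have := P.le_max' q hq
      rw [← hp₀def, Fin.le_def] at this
      simp [hqdef] at this
    · obtain ⟨p, hp, he⟩ := mem_image.1 hq
      have h1 := (hvalP p hp).1
      have h2 := congrArg Fin.val he
      simp only [hpmdef, hqdef] at h2
      have := P.le_max' p hp
      rw [← hp₀def, Fin.le_def] at this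
      omega
  have hAcard : A.card = 2 * P.card + 1 := by
    rw [hAdef, card_union_of_disjoint (by simp [hqnot]),
        card_union_of_disjoint hdisj1, card_image_of_injOn hinjpm]
    simp; ring
  have hAval : ∀ a ∈ A, (w a).val ≤ (w i₀).val := by
    intro a ha
    rw [hAdef, mem_union, mem_union] at ha
    rcases ha with (ha | ha) | ha
    · have := ((hmemP a).1 ha).2
      rwa [Fin.le_def] at this
    · obtain ⟨p, hp, he⟩ := mem_image.1 ha
      obtain ⟨hpk, hle⟩ := (hmemP p).1 hp
      obtain ⟨h1, h2, h3, h4⟩ := hpk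
      have : a = ⟨p.val - 1, Nat.lt_of_le_of_lt (Nat.sub_le _ _) p.isLt⟩ := by
        rw [← he]
      rw [this]
      rw [Fin.le_def] at hle
      rw [Fin.lt_def] at h3
      omega
    · have ha' : a = q := by simpa using ha
      rw [ha']
      rw [Fin.lt_def] at hp₀r
      have := ((hmemP p₀).1 hp₀P).2
      rw [Fin.le_def] at this
      omega
  have hB : (A.image (fun a => (w a).val)) ⊆ Finset.range ((w i₀).val + 1) := by
    intro x hx
    obtain ⟨a, ha, rfl⟩ := mem_image.1 hx
    rw [mem_range]
    exact Nat.lt_succ_of_le (hAval a ha)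
  have hBcard : (A.image (fun a => (w a).val)).card = A.card := by
    apply card_image_of_injOn
    intro a _ b _ he
    exact w.injective (Fin.ext he)
  have := card_le_card hB
  rw [hBcard, hAcard, card_range] at this
  rw [hcard]
  omega


theorem admissible_characterization (S : Finset ℕ) (hS : S.Nonempty)
    (hpos : ∀ s ∈ S, 0 < s) :
    Admissible S ↔ Admissible (S.erase (S.max' hS)) ∧ 2 * S.card < S.max' hS := by
  classical
  set m := S.max' hS with hm
  have hmS : m ∈ S := S.max'_mem hS
  have hfull : S.filter (· ≤ m) = S := by
    ext x
    simp only [mem_filter]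
    exact ⟨And.left, fun hx => ⟨hx, S.le_max' x hx⟩⟩
  constructor
  · intro h
    have hgood := admissible_good h
    constructor
    · apply good_admissible
      intro s hs
      have hs' : s ∈ S := mem_of_mem_erase hs
      have hsub : (S.erase m).filter (· ≤ s) ⊆ S.filter (· ≤ s) := by
        intro x hx
        rw [mem_filter] at hx ⊢
        exact ⟨mem_of_mem_erase hx.1, hx.2⟩
      have := card_le_card hsub
      have := hgood s hs'
      omega
    · have := hgood m hmS
      rwa [hfull] at this
  · rintro ⟨hadm, hcard⟩
    have hgoodE := admissible_good hadm
    apply good_admissible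
    intro s hs
    rcases eq_or_ne s m with rfl | hne
    · rw [hfull]; exact hcard
    · have hsE : s ∈ S.erase m := mem_erase.2 ⟨hne, hs⟩
      have hslt : s < m := lt_of_le_of_ne (S.le_max' s hs) hne
      have heq : S.filter (· ≤ s) = (S.erase m).filter (· ≤ s) := by
        ext x
        simp only [mem_filter, mem_erase]
        constructor
        · rintro ⟨hxS, hxle⟩
          refine ⟨⟨?_, hxS⟩, hxle⟩
          rintro rfl
          exact absurd hxle (not_le.2 hslt)
        · rintro ⟨⟨_, hxS⟩, hxle⟩
          exact ⟨hxS, hxle⟩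
      rw [heq]
      exact hgoodE s hsE
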